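/- Rodrigues' formula: for any nonzero ω ∈ ℝ³ with θ = ‖ω‖, the matrix exponential satisfies exp(ω^∧) = I + (sin θ / θ) ω^∧ + ((1 − cos θ)/θ²) (ω^∧)². -/

import Mathlib

open Matrix Real Nat

/-- The hat operator mapping a vector in ℝ³ to a skew-symmetric 3×3 matrix. -/
def hat (ω : Fin 3 → ℝ) : Matrix (Fin 3) (Fin 3) ℝ :=
  !![0, -ω 2, ω 1; ω 2, 0, -ω 0; -ω 1, ω 0, 0]

attribute [local instance] Matrix.linftyOpNormedRing Matrix.linftyOpNormedAlgebra

private lemma hat_cube (ω : Fin 3 → ℝ) (θ : ℝ)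
    (h2 : θ ^ 2 = ω 0 ^ 2 + ω 1 ^ 2 + ω 2 ^ 2) :
    hat ω ^ 3 = (-(θ ^ 2)) • hat ω := by
  rw [h2, pow_succ, pow_two]
  ext i j
  fin_cases i <;> fin_cases j <;>
    simp [hat, Matrix.mul_apply, Fin.sum_univ_three] <;> ring

private lemma hat_pow_odd (ω : Fin 3 → ℝ) (θ : ℝ)
    (h2 : θ ^ 2 = ω 0 ^ 2 + ω 1 ^ 2 + ω 2 ^ 2) (k : ℕ) :
    hat ω ^ (2 * k + 1) = ((-1) ^ k * θ ^ (2 * k)) • hat ω := by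
  induction k with
  | zero => simp
  | succ k ih =>
    have : 2 * (k + 1) + 1 = (2 * k + 1) + 2 := by ring
    rw [this, pow_add, ih, Matrix.smul_mul, ← pow_succ' (hat ω) 2,
      show (2:ℕ) + 1 = 3 from rfl, hat_cube ω θ h2, smul_smul]
    congr 1
    ring

private lemma hat_pow_even (ω : Fin 3 → ℝ) (θ : ℝ)
    (h2 : θ ^ 2 = ω 0 ^ 2 + ω 1 ^ 2 + ω 2 ^ 2) (k : ℕ) :
    hat ω ^ (2 * k + 2) = ((-1) ^ k * θ ^ (2 * k)) • (hat ω * hat ω) := by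
  have := hat_pow_odd ω θ h2 k
  have h : hat ω ^ (2 * k + 2) = hat ω ^ (2 * k + 1) * hat ω := by
    rw [← pow_succ]
  rw [h, this, Matrix.smul_mul]

theorem rodrigues_formula (ω : Fin 3 → ℝ) (hω : ω ≠ 0)
    (θ : ℝ) (hθ : θ = Real.sqrt (ω 0 ^ 2 + ω 1 ^ 2 + ω 2 ^ 2)) :
    NormedSpace.exp (hat ω) =
      1 + (Real.sin θ / θ) • hat ω +
        ((1 - Real.cos θ) / θ^2) • (hat ω * hat ω) := by
  have hsum : (0:ℝ) < ω 0 ^ 2 + ω 1 ^ 2 + ω 2 ^ 2 := by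
    rcases (show ω 0 ≠ 0 ∨ ω 1 ≠ 0 ∨ ω 2 ≠ 0 by
      by_contra h
      push_neg at h
      apply hω
      ext i
      fin_cases i <;> simp [h.1, h.2.1, h.2.2]) with h | h | h <;> positivity
  have hθpos : 0 < θ := hθ ▸ Real.sqrt_pos.mpr hsum
  have hθne : θ ≠ 0 := hθpos.ne'
  have h2 : θ ^ 2 = ω 0 ^ 2 + ω 1 ^ 2 + ω 2 ^ 2 := by
    rw [hθ, Real.sq_sqrt hsum.le]
  set A := hat ω with hA
  set f : ℕ → Matrix (Fin 3) (Fin 3) ℝ := fun n => ((Nat.factorial n : ℝ))⁻¹ • A ^ n with hf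
  have hfsum : Summable f := NormedSpace.expSeries_summable' (𝕂 := ℝ) A
  have hexp : NormedSpace.exp A = ∑' n, f n := by
    rw [NormedSpace.exp_eq_tsum (𝕂 := ℝ)]
  -- odd part
  have hodd_scalar : HasSum (fun k : ℕ => (-1) ^ k * θ ^ (2 * k) / ((2 * k + 1)! : ℝ))
      (Real.sin θ / θ) := by
    have h := (Real.hasSum_sin θ).div_const θ
    convert h using 2 with k
    · rfl
    field_simp
    ring
  have hodd : ∑' k, f (2 * k + 1) = (Real.sin θ / θ) • A := by
    have h1 : ∀ k, f (2 * k + 1) = ((-1) ^ k * θ ^ (2 * k) / ((2 * k + 1)! : ℝ)) • A := by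
      intro k
      rw [hf]
      simp only
      rw [hat_pow_odd ω θ h2 k, smul_smul]
      congr 1
      field_simp
    rw [tsum_congr h1, Summable.tsum_smul_const hodd_scalar.summable, hodd_scalar.tsum_eq]
  -- even part (k ≥ 1)
  have heven_scalar : HasSum (fun k : ℕ => (-1) ^ k * θ ^ (2 * k) / ((2 * k + 2)! : ℝ))
      ((1 - Real.cos θ) / θ ^ 2) := by
    have h1 : HasSum (fun k : ℕ => (-1) ^ (k + 1) * θ ^ (2 * (k + 1)) / (2 * (k + 1))!)
        (Real.cos θ - 1) := by
      refine (hasSum_nat_add_iff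
        (f := fun n : ℕ => (-1) ^ n * θ ^ (2 * n) / (2 * n)!) 1).mpr ?_
      convert Real.hasSum_cos θ using 1
      · rfl
      simp
    have h2' := h1.div_const (-(θ ^ 2))
    have heq : (1 - Real.cos θ) / θ ^ 2 = (Real.cos θ - 1) / (-(θ ^ 2)) := by
      field_simp
      ring
    have hfun : (fun k : ℕ => (-1) ^ k * θ ^ (2 * k) / ((2 * k + 2)! : ℝ)) =
        fun k : ℕ => (-1) ^ (k + 1) * θ ^ (2 * (k + 1)) / ((2 * (k + 1))! : ℝ) / (-(θ ^ 2)) := by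
      funext k
      rw [show 2 * (k + 1) = 2 * k + 2 from by ring]
      have hne : ((2 * k + 2)! : ℝ) ≠ 0 := by positivity
      field_simp
      ring
    rw [heq, hfun]
    exact h2'
  have heven : ∑' k, f (2 * k + 2) = ((1 - Real.cos θ) / θ ^ 2) • (A * A) := by
    have h1 : ∀ k, f (2 * k + 2) = ((-1) ^ k * θ ^ (2 * k) / ((2 * k + 2)! : ℝ)) • (A * A) := by
      intro k
      rw [hf]
      simp only
      rw [hat_pow_even ω θ h2 k, smul_smul]
      congr 1
      field_simp
    rw [tsum_congr h1, Summable.tsum_smul_const heven_scalar.summable, heven_scalar.tsum_eq]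
  -- assemble
  have hsplit : ∑' n, f n = (∑' k, f (2 * k)) + ∑' k, f (2 * k + 1) := by
    exact (tsum_even_add_odd (hfsum.comp_injective (fun a b => by omega))
      (hfsum.comp_injective (fun a b => by omega))).symm
  have hzero : ∑' k, f (2 * k) = f 0 + ∑' k, f (2 * k + 2) := by
    have hs : Summable (fun k => f (2 * k)) := hfsum.comp_injective (fun a b => by omega)
    rw [Summable.tsum_eq_zero_add hs]
    have he : (fun k : ℕ => f (2 * (k + 1))) = fun k => f (2 * k + 2) := by
      funext k
      rw [show 2 * (k + 1) = 2 * k + 2 from by ring]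
    rw [he, show 2 * 0 = 0 from rfl]
  have hf0 : f 0 = 1 := by simp [hf]
  rw [hexp, hsplit, hzero, hf0, hodd, heven]
  abel
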